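/- Let G=(W,E) be a finite simple graph with E nonempty, let k be a natural number, and fix an orientation (x_e, y_e) of each edge e ∈ E. Construct the parliamentary election whose running parties are p_1 and one party s_w for each vertex w ∈ W, with exactly one voter per edge e ∈ E, ranking s_{x_e} ≻ s_{y_e} ≻ p_1 ≻ (all remaining parties in some fixed order). Let the coalition be C = {p_1}, with no electoral threshold. Then G contains a k-clique if and only if there exists a set P⁻ ⊆ {s_w : w ∈ W} with |P⁻| ≤ k such that, in the election obtained by deleting the parties of P⁻, the vote fraction of {p_1} is at least (k(k−1)/2)/|E|. -/

import Mathlib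

open scoped Classical

section Defs

variable {U V : Type*}

/-- `p` is the most-preferred member of the running set `P` under the linear order `L`
(greater means more preferred). -/
def TopOf (L : LinearOrder U) (P : Finset U) (p : U) : Prop :=
  p ∈ P ∧ ∀ q ∈ P, q ≠ p → L.lt q p

/-- Number of voters whose most-preferred running party lies in `A`. -/
noncomputable def votes [Fintype V] (pref : V → LinearOrder U) (P A : Finset U) : ℕ :=
  (Finset.univ.filter fun v : V => ∃ p ∈ A, TopOf (pref v) P p).card

/-- Fraction of voters whose most-preferred running party lies in `A`. -/
noncomputable def voteFrac [Fintype V] (pref : V → LinearOrder U) (P A : Finset U) : ℚ :=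
  (votes pref P A : ℚ) / (Fintype.card V : ℚ)

/-- Total number of votes received by active parties (receiving at least `T` votes) among `A`. -/
noncomputable def activeVotes [Fintype V] (pref : V → LinearOrder U) (P : Finset U) (T : ℕ)
    (A : Finset U) : ℕ :=
  ∑ p ∈ A, if T ≤ votes pref P {p} then votes pref P {p} else 0

/-- Active-vote fraction of `A`. -/
noncomputable def activeFrac [Fintype V] (pref : V → LinearOrder U) (P : Finset U) (T : ℕ)
    (A : Finset U) : ℚ :=
  (activeVotes pref P T A : ℚ) / (activeVotes pref P T P : ℚ)

/-- The linear order `L` respects the tier function `t` (smaller tier = more preferred). -/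
def PrefTiers (L : LinearOrder U) (t : U → ℕ) : Prop :=
  ∀ a b : U, t a < t b → L.lt b a

/-- Pairs `(p, q)` with `p ≻ q` under `L` and `q ≻ p` under `L'`. -/
noncomputable def invPairs [Fintype U] (L L' : LinearOrder U) : Finset (U × U) :=
  Finset.univ.filter fun pq : U × U => L.lt pq.2 pq.1 ∧ L'.lt pq.1 pq.2

/-- Swap-bribery cost of replacing `L` by `L'` with swap-price function `sw`. -/
noncomputable def swapCost [Fintype U] (L L' : LinearOrder U) (sw : U → U → ℝ) : ℝ :=
  ∑ pq ∈ invPairs L L', sw pq.1 pq.2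

end Defs

/-- Election (deleting opposition parties, J objective, no threshold):
parties are $p_1$ (= `Sum.inr ()`) and one party $s_w$ (= `Sum.inl w`) per vertex; one voter
per edge $e$ ranking $s_{x_e} ≻ s_{y_e} ≻ p_1 ≻$ rest.  $G$ has a $k$-clique iff one can delete
at most $k$ vertex-parties so that $p_1$'s vote fraction reaches $(k(k-1)/2)/|E|$. -/
theorem dop_clique_reduction
    {W : Type*} [Fintype W] [DecidableEq W]
    (G : SimpleGraph W) [DecidableRel G.Adj] (hE : G.edgeFinset.Nonempty) (k : ℕ)
    (x y : Sym2 W → W) (hxy : ∀ e ∈ G.edgeFinset, e = s(x e, y e))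
    (pref : ↥G.edgeFinset → LinearOrder (W ⊕ Unit))
    (hpref : ∀ e : ↥G.edgeFinset, PrefTiers (pref e)
      (Sum.elim (fun w => if w = x ↑e then (0 : ℕ) else if w = y ↑e then 1 else 3)
        (fun _ => 2))) :
    (∃ K : Finset W, K.card = k ∧ G.IsClique (K : Set W)) ↔
    (∃ Pm : Finset (W ⊕ Unit), Pm ⊆ Finset.univ.image Sum.inl ∧ Pm.card ≤ k ∧
      ((k * (k - 1) / 2 : ℕ) : ℚ) / (G.edgeFinset.card : ℚ) ≤
        voteFrac pref (Finset.univ \ Pm) {Sum.inr ()}) := by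
  classical
  have hEpos : 0 < (G.edgeFinset.card : ℚ) := by
    exact_mod_cast Finset.card_pos.2 hE
  -- endpoints of an edge are distinct
  have hadj : ∀ e ∈ G.edgeFinset, G.Adj (x e) (y e) := by
    intro e he
    have : e ∈ G.edgeSet := SimpleGraph.mem_edgeFinset.1 he
    rw [hxy e he] at this
    exact this
  have hne : ∀ e ∈ G.edgeFinset, x e ≠ y e := fun e he => (hadj e he).ne
  -- characterization of voting for p₁
  have htop : ∀ (Pm : Finset (W ⊕ Unit)), Pm ⊆ Finset.univ.image Sum.inl →
      ∀ (e : ↥G.edgeFinset),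
      ((∃ p ∈ ({Sum.inr ()} : Finset (W ⊕ Unit)), TopOf (pref e) (Finset.univ \ Pm) p) ↔
        (Sum.inl (x ↑e) ∈ Pm ∧ Sum.inl (y ↑e) ∈ Pm)) := by
    intro Pm hPm e
    have hp := hpref e
    have hxyne := hne ↑e e.2
    simp only [Finset.mem_singleton, exists_eq_left]
    constructor
    · rintro ⟨hmem, h⟩
      constructor
      · by_contra hx
        have hq : Sum.inl (x ↑e) ∈ Finset.univ \ Pm := by
          simp [Finset.mem_sdiff, hx]
        have h1 := h _ hq (by simp)
        have h2 : (pref e).lt (Sum.inr ()) (Sum.inl (x ↑e)) := by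
          apply hp
          simp
        letI := pref e
        exact absurd h1 (lt_asymm h2)
      · by_contra hy
        have hq : Sum.inl (y ↑e) ∈ Finset.univ \ Pm := by
          simp [Finset.mem_sdiff, hy]
        have h1 := h _ hq (by simp)
        have h2 : (pref e).lt (Sum.inr ()) (Sum.inl (y ↑e)) := by
          apply hp
          simp [Ne.symm hxyne]
        letI := pref e
        exact absurd h1 (lt_asymm h2)
    · rintro ⟨hx1, hy1⟩
      constructor
      · simp only [Finset.mem_sdiff, Finset.mem_univ, true_and]
        intro hc
        obtain ⟨w, -, hw⟩ := Finset.mem_image.1 (hPm hc)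
        exact absurd hw (by simp)
      · rintro (w | u) hq hqne
        · have hq2 := (Finset.mem_sdiff.1 hq).2
          have hwx : w ≠ x ↑e := fun h => hq2 (h ▸ hx1)
          have hwy : w ≠ y ↑e := fun h => hq2 (h ▸ hy1)
          apply hp
          simp [hwx, hwy]
        · exact absurd (by rfl : Sum.inr u = Sum.inr ()) hqne
  -- vote count
  have hvotes : ∀ (Pm : Finset (W ⊕ Unit)), Pm ⊆ Finset.univ.image Sum.inl →
      votes pref (Finset.univ \ Pm) {Sum.inr ()} =
      (G.edgeFinset.filter fun e => Sum.inl (x e) ∈ Pm ∧ Sum.inl (y e) ∈ Pm).card := by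
    intro Pm hPm
    unfold votes
    have h1 : (Finset.univ.filter fun v : ↥G.edgeFinset =>
        ∃ p ∈ ({Sum.inr ()} : Finset (W ⊕ Unit)), TopOf (pref v) (Finset.univ \ Pm) p)
        = Finset.univ.filter fun v : ↥G.edgeFinset =>
            Sum.inl (x ↑v) ∈ Pm ∧ Sum.inl (y ↑v) ∈ Pm :=
      Finset.filter_congr fun v _ => htop Pm hPm v
    rw [h1]
    refine Finset.card_bij (fun v _ => (v : Sym2 W)) ?_ ?_ ?_
    · intro v hv
      simp only [Finset.mem_filter, Finset.mem_univ, true_and] at hv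
      exact Finset.mem_filter.2 ⟨v.2, hv⟩
    · intro a _ b _ h
      exact Subtype.ext h
    · intro b hb
      obtain ⟨hb1, hb2⟩ := Finset.mem_filter.1 hb
      exact ⟨⟨b, hb1⟩, by simpa using hb2, rfl⟩
  rw [show (k * (k - 1) / 2 : ℕ) = k.choose 2 from (Nat.choose_two_right k).symm]
  constructor
  · -- clique → deletion set
    rintro ⟨K, hKcard, hK⟩
    refine ⟨K.image Sum.inl, ?_, ?_, ?_⟩
    · exact Finset.image_subset_image (Finset.subset_univ K)
    · rw [Finset.card_image_of_injective K Sum.inl_injective, hKcard]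
    · have hsub : K.image (Sum.inl : W → W ⊕ Unit) ⊆ Finset.univ.image Sum.inl :=
        Finset.image_subset_image (Finset.subset_univ K)
      have hS : (G.edgeFinset.filter fun e =>
          Sum.inl (x e) ∈ K.image (Sum.inl : W → W ⊕ Unit) ∧
            Sum.inl (y e) ∈ K.image (Sum.inl : W → W ⊕ Unit))
          = K.offDiag.image Sym2.mk.uncurry := by
        ext z
        simp only [Finset.mem_filter, Finset.mem_image, Finset.mem_offDiag,
          Sum.inl.injEq, exists_eq_right, Prod.exists]
        constructor
        · rintro ⟨hz, hxK, hyK⟩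
          exact ⟨x z, y z, ⟨hxK, hyK, hne z hz⟩, (hxy z hz).symm⟩
        · rintro ⟨a, b, ⟨ha, hb, hab⟩, rfl⟩
          have hadj' : G.Adj a b := hK ha hb hab
          have hzE : s(a, b) ∈ G.edgeFinset := SimpleGraph.mem_edgeFinset.2 hadj'
          have heq := hxy s(a, b) hzE
          rw [Sym2.eq_iff] at heq
          rcases heq with ⟨h1, h2⟩ | ⟨h1, h2⟩
          · exact ⟨hzE, h1 ▸ ha, h2 ▸ hb⟩
          · exact ⟨hzE, h2 ▸ hb, h1 ▸ ha⟩
      unfold voteFrac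
      rw [hvotes _ hsub, hS, Sym2.card_image_offDiag, hKcard, Fintype.card_coe]
  · -- deletion set → clique
    rintro ⟨Pm, hPm, hPmcard, hfrac⟩
    set K : Finset W := Finset.univ.filter fun w => Sum.inl w ∈ Pm with hKdef
    have hKcard : K.card ≤ k := by
      refine le_trans (Finset.card_le_card_of_injOn Sum.inl ?_ ?_) hPmcard
      · intro w hw
        exact (Finset.mem_filter.1 hw).2
      · intro a _ b _ h
        exact Sum.inl_injective h
    have hsubD : (G.edgeFinset.filter fun e => Sum.inl (x e) ∈ Pm ∧ Sum.inl (y e) ∈ Pm)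
        ⊆ K.offDiag.image Sym2.mk.uncurry := by
      intro z hz
      obtain ⟨hz1, hz2, hz3⟩ := Finset.mem_filter.1 hz
      refine Finset.mem_image.2 ⟨(x z, y z), ?_, (hxy z hz1).symm⟩
      simp only [Finset.mem_offDiag, hKdef, Finset.mem_filter, Finset.mem_univ, true_and]
      exact ⟨hz2, hz3, hne z hz1⟩
    have hSge : k.choose 2 ≤
        (G.edgeFinset.filter fun e => Sum.inl (x e) ∈ Pm ∧ Sum.inl (y e) ∈ Pm).card := by
      have h1 : ((k.choose 2 : ℕ) : ℚ) ≤
          ((G.edgeFinset.filter fun e =>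
            Sum.inl (x e) ∈ Pm ∧ Sum.inl (y e) ∈ Pm).card : ℚ) := by
        have := hfrac
        unfold voteFrac at this
        rw [hvotes Pm hPm, Fintype.card_coe] at this
        exact (div_le_div_iff_of_pos_right hEpos).1 this
      exact_mod_cast h1
    have hSle : (G.edgeFinset.filter fun e =>
        Sum.inl (x e) ∈ Pm ∧ Sum.inl (y e) ∈ Pm).card ≤ K.card.choose 2 := by
      calc _ ≤ (K.offDiag.image Sym2.mk.uncurry).card := Finset.card_le_card hsubD
        _ = K.card.choose 2 := Sym2.card_image_offDiag K
    by_cases hk2 : k ≤ 1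
    · -- trivial cliques
      interval_cases k
      · exact ⟨∅, by simp, by simp [SimpleGraph.isClique_empty]⟩
      · obtain ⟨e, he⟩ := hE
        refine ⟨{x e}, by simp, ?_⟩
        simp [SimpleGraph.isClique_singleton]
    · push_neg at hk2
      have hmk : K.card = k := by
        by_contra h
        have hlt : K.card < k := lt_of_le_of_ne hKcard h
        have hc : k.choose 2 ≤ K.card.choose 2 := le_trans hSge hSle
        have hlt2 : K.card.choose 2 < k.choose 2 := by
          rcases Nat.eq_zero_or_pos K.card with h0 | hpos
          · rw [h0]
            exact Nat.choose_pos hk2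
          · have hst : K.card.choose 2 < (K.card + 1).choose 2 := by
              have h2 := Nat.choose_succ_succ K.card 1
              norm_num at h2
              have h3 : K.card.choose 1 = K.card := Nat.choose_one_right _
              omega
            exact lt_of_lt_of_le hst (Nat.choose_le_choose 2 hlt)
        omega
      have hScard : (G.edgeFinset.filter fun e =>
          Sum.inl (x e) ∈ Pm ∧ Sum.inl (y e) ∈ Pm).card = k.choose 2 := by
        rw [hmk] at hSle
        omega
      have hSD : (G.edgeFinset.filter fun e => Sum.inl (x e) ∈ Pm ∧ Sum.inl (y e) ∈ Pm)
          = K.offDiag.image Sym2.mk.uncurry := by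
        apply Finset.eq_of_subset_of_card_le hsubD
        rw [Sym2.card_image_offDiag, hmk, hScard]
      refine ⟨K, hmk, ?_⟩
      intro a ha b hb hab
      have hmem : s(a, b) ∈ K.offDiag.image Sym2.mk.uncurry :=
        Finset.mem_image.2 ⟨(a, b), Finset.mem_offDiag.2 ⟨ha, hb, hab⟩, rfl⟩
      rw [← hSD] at hmem
      have hzE := (Finset.mem_filter.1 hmem).1
      have : s(a, b) ∈ G.edgeSet := SimpleGraph.mem_edgeFinset.1 hzE
      exact this
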